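/- Let f : ℝ → ℂ be square-integrable (∫_ℝ |f(u)|² du < ∞). Then for every z ∈ ℂ the function u ↦ A(z,u)·f(u) is integrable on ℝ, and the Segal–Bargmann transform (SB f)(z) = ∫_ℝ A(z,u) f(u) du defines an entire function of z (complex differentiable on all of ℂ). -/

import Mathlib

open MeasureTheory

/-- The Bargmann kernel `A(z,u) = exp(-u²/2 + √2 u z - z²/2)`. -/
noncomputable def bargmannKernel (z : ℂ) (u : ℝ) : ℂ :=
  Complex.exp (-(u : ℂ) ^ 2 / 2 + (Real.sqrt 2 : ℂ) * (u : ℂ) * z - z ^ 2 / 2)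

lemma bargmann_norm (z : ℂ) (u : ℝ) :
    ‖bargmannKernel z u‖ = Real.exp (-u^2/2 + Real.sqrt 2 * u * z.re - (z.re^2 - z.im^2)/2) := by
  rw [bargmannKernel, Complex.norm_exp]
  congr 1
  simp [Complex.add_re, Complex.sub_re, Complex.mul_re, Complex.div_re, Complex.normSq,
    ← Complex.ofReal_pow, pow_two]

lemma bargmann_re_le {R : ℝ} {z : ℂ} (hz : ‖z‖ ≤ R) (u : ℝ) :
    -u^2/2 + Real.sqrt 2 * u * z.re - (z.re^2 - z.im^2)/2 ≤ 5*R^2/2 + -u^2/4 := by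
  have h2 : (0:ℝ) ≤ Real.sqrt 2 := Real.sqrt_nonneg 2
  have h2' : Real.sqrt 2 ^ 2 = 2 := Real.sq_sqrt (by norm_num)
  have hre : |z.re| ≤ R := (Complex.abs_re_le_norm z).trans hz
  have him : |z.im| ≤ R := (Complex.abs_im_le_norm z).trans hz
  have h1 : Real.sqrt 2 * u * z.re ≤ Real.sqrt 2 * |u| * R := by
    calc Real.sqrt 2 * u * z.re ≤ |Real.sqrt 2 * u * z.re| := le_abs_self _
    _ = Real.sqrt 2 * |u| * |z.re| := by rw [abs_mul, abs_mul, abs_of_nonneg h2]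
    _ ≤ Real.sqrt 2 * |u| * R := mul_le_mul_of_nonneg_left hre (by positivity)
  have h3 : Real.sqrt 2 * |u| * R ≤ u^2/4 + 2*R^2 := by
    nlinarith [sq_nonneg (|u|/2 - Real.sqrt 2 * R), sq_abs u]
  nlinarith [sq_le_sq' (neg_le_of_abs_le him) (le_of_abs_le him), sq_nonneg z.re]

lemma bargmann_norm_le {R : ℝ} {z : ℂ} (hz : ‖z‖ ≤ R) (u : ℝ) :
    ‖bargmannKernel z u‖ ≤ Real.exp (5*R^2/2) * Real.exp (-u^2/4) := by
  rw [bargmann_norm, ← Real.exp_add]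
  exact Real.exp_le_exp.2 (bargmann_re_le hz u)

lemma expGauss_memL2 {c : ℝ} (hc : 0 < c) :
    MemLp (fun u : ℝ => Real.exp (-c * u ^ 2)) 2 volume := by
  have hcont : Continuous fun u : ℝ => Real.exp (-c * u ^ 2) := by continuity
  rw [memLp_two_iff_integrable_sq hcont.aestronglyMeasurable]
  have : (fun u : ℝ => (Real.exp (-c * u ^ 2)) ^ 2) =
      fun u : ℝ => Real.exp (-(2*c) * u ^ 2) := by
    funext u; rw [sq, ← Real.exp_add]; ring_nf
  rw [this]
  exact integrable_exp_neg_mul_sq (by positivity)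

lemma holder_one : (1 : ENNReal)/1 = 1/2 + 1/2 := by
  rw [ENNReal.div_add_div_same, one_div_one, one_add_one_eq_two]
  exact (ENNReal.div_self two_ne_zero ENNReal.ofNat_ne_top).symm

lemma mul_L2_integrable (f : ℝ → ℂ) (hf : MemLp f 2 (volume : Measure ℝ))
    (g : ℝ → ℝ) (hg : MemLp g 2 (volume : Measure ℝ)) :
    Integrable (fun u => g u * ‖f u‖) := by
  have h := hf.norm.smul hg (p := 2) (q := 2) (r := 1)
  rw [memLp_one_iff_integrable] at h
  simpa [Pi.smul_apply', smul_eq_mul, Pi.mul_def] using h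

lemma bargmann_hasDerivAt (u : ℝ) (z : ℂ) :
    HasDerivAt (fun w : ℂ => bargmannKernel w u)
      (((Real.sqrt 2 : ℂ) * u - z) * bargmannKernel z u) z := by
  have h1 : HasDerivAt (fun w : ℂ => (Real.sqrt 2 : ℂ) * u * w) ((Real.sqrt 2 : ℂ) * u) z := by
    simpa using (hasDerivAt_id z).const_mul ((Real.sqrt 2 : ℂ) * u)
  have h2 : HasDerivAt (fun w : ℂ => w ^ 2 / 2) z z := by
    have := (hasDerivAt_pow 2 z).div_const 2
    simpa using this
  have h : HasDerivAt (fun w : ℂ => -(u:ℂ)^2/2 + (Real.sqrt 2 : ℂ)*u*w - w^2/2)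
      ((Real.sqrt 2 : ℂ) * u - z) z := by
    simpa using (h1.const_add (-(u:ℂ)^2/2)).fun_sub h2
  simpa [bargmannKernel, mul_comm] using h.cexp

lemma aux_ineq {R : ℝ} (hR : 0 ≤ R) (u : ℝ) :
    (Real.sqrt 2 * |u| + R) * Real.exp (-u^2/4) ≤ (5+R) * Real.exp (-(1/8)*u^2) := by
  have h : Real.exp (-u^2/4) = Real.exp (-(1/8)*u^2) * Real.exp (-(1/8)*u^2) := by
    rw [← Real.exp_add]; ring_nf
  rw [h, ← mul_assoc]
  apply mul_le_mul_of_nonneg_right _ (Real.exp_pos _).le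
  have h2' : Real.sqrt 2 ^ 2 = 2 := Real.sq_sqrt (by norm_num)
  have e1 : Real.sqrt 2 * |u| ≤ u^2/8 + 4 := by
    nlinarith [sq_nonneg (|u|/2 - 2*Real.sqrt 2), sq_abs u, Real.sqrt_nonneg 2]
  have key : u^2/8 ≤ Real.exp (u^2/8) := by
    nlinarith [Real.add_one_le_exp (u^2/8)]
  have e2 : (u^2/8) * Real.exp (-(1/8)*u^2) ≤ 1 := by
    have hx : -(1/8)*u^2 = -(u^2/8) := by ring
    rw [hx, Real.exp_neg]
    rw [mul_inv_le_iff₀ (Real.exp_pos _), one_mul]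
    exact key
  have e3 : Real.exp (-(1/8)*u^2) ≤ 1 := Real.exp_le_one_iff.2 (by nlinarith)
  nlinarith [Real.exp_pos (-(1/8)*u^2), abs_nonneg u, Real.sqrt_nonneg 2,
    mul_le_mul_of_nonneg_right e1 (Real.exp_pos (-(1/8)*u^2)).le,
    mul_le_mul_of_nonneg_left e3 hR]

lemma bargmann_continuous (z : ℂ) : Continuous fun u : ℝ => bargmannKernel z u := by
  unfold bargmannKernel
  fun_prop

/-- For `f ∈ L²(ℝ)`, the integrand of the Segal–Bargmann transform is
integrable for every `z`, and `SB f` is an entire function. -/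
theorem segalBargmann_wellDefined_entire (f : ℝ → ℂ)
    (hf : MemLp f 2 (volume : Measure ℝ)) :
    (∀ z : ℂ, Integrable (fun u : ℝ => bargmannKernel z u * f u)) ∧
    Differentiable ℂ (fun z : ℂ => ∫ u : ℝ, bargmannKernel z u * f u) := by
  have hfm := hf.aestronglyMeasurable
  have hkerL2 : ∀ z : ℂ, MemLp (fun u : ℝ => bargmannKernel z u) 2 volume := by
    intro z
    refine MemLp.of_le
      ((expGauss_memL2 (c := 1/4) (by norm_num)).const_mul (Real.exp (5*‖z‖^2/2)))
      (bargmann_continuous z).aestronglyMeasurable ?_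
    filter_upwards with u
    have h := bargmann_norm_le (le_refl ‖z‖) u
    rw [Real.norm_eq_abs, abs_of_nonneg (by positivity)]
    calc ‖bargmannKernel z u‖ ≤ Real.exp (5*‖z‖^2/2) * Real.exp (-u^2/4) := h
    _ = Real.exp (5*‖z‖^2/2) * Real.exp (-(1/4)*u^2) := by ring_nf
  have hint : ∀ z : ℂ, Integrable (fun u : ℝ => bargmannKernel z u * f u) := by
    intro z
    have h := hf.smul (hkerL2 z) (p := 2) (q := 2) (r := 1)
    rw [memLp_one_iff_integrable] at h
    simpa [Pi.smul_apply', smul_eq_mul, Pi.mul_def] using h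
  refine ⟨hint, fun z₀ => ?_⟩
  set R : ℝ := ‖z₀‖ + 1 with hRdef
  have hR0 : (0:ℝ) ≤ R := by positivity
  set K : ℝ := Real.exp (5*R^2/2) with hKdef
  have hK0 : (0:ℝ) ≤ K := (Real.exp_pos _).le
  have hgL2 : MemLp (fun u : ℝ => (5+R)*K*Real.exp (-(1/8)*u^2)) 2 volume := by
    simpa [mul_assoc] using (expGauss_memL2 (c := 1/8) (by norm_num)).const_mul ((5+R)*K)
  have hbound_int : Integrable (fun u : ℝ => (5+R)*K*Real.exp (-(1/8)*u^2) * ‖f u‖) :=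
    mul_L2_integrable f hf _ hgL2
  have key := hasDerivAt_integral_of_dominated_loc_of_deriv_le (μ := (volume : Measure ℝ))
      (F := fun z u => bargmannKernel z u * f u)
      (F' := fun z u => ((Real.sqrt 2 : ℂ) * u - z) * bargmannKernel z u * f u)
      (x₀ := z₀) (s := Metric.ball z₀ 1) (Metric.ball_mem_nhds z₀ one_pos)
      (Filter.Eventually.of_forall fun z =>
        ((bargmann_continuous z).aestronglyMeasurable.mul hfm))
      (hint z₀)
      (by
        apply AEStronglyMeasurable.mul _ hfm
        apply Continuous.aestronglyMeasurable
        exact (by fun_prop : Continuous fun u : ℝ => ((Real.sqrt 2 : ℂ) * u - z₀)).mul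
          (bargmann_continuous z₀))
      (bound := fun u : ℝ => (5+R)*K*Real.exp (-(1/8)*u^2) * ‖f u‖)
      (Filter.Eventually.of_forall fun u => by
        intro z hz
        have hzR : ‖z‖ ≤ R := by
          have := mem_ball_iff_norm.mp hz
          have h2 : ‖z‖ ≤ ‖z₀‖ + ‖z - z₀‖ := by
            simpa [add_comm] using norm_add_le (z - z₀) z₀
          rw [hRdef]; linarith
        rw [norm_mul, norm_mul]
        have hA : ‖bargmannKernel z u‖ ≤ K * Real.exp (-u^2/4) := bargmann_norm_le hzR u
        have hlin : ‖(Real.sqrt 2 : ℂ) * u - z‖ ≤ Real.sqrt 2 * |u| + R := by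
          refine (norm_sub_le _ _).trans ?_
          gcongr
          · rw [norm_mul]
            simp [Complex.norm_real, Real.norm_eq_abs, abs_of_nonneg (Real.sqrt_nonneg 2)]
        have h1 : ‖(Real.sqrt 2 : ℂ) * u - z‖ * ‖bargmannKernel z u‖ ≤
            (Real.sqrt 2 * |u| + R) * (K * Real.exp (-u^2/4)) := by
          apply mul_le_mul hlin hA (norm_nonneg _) (by positivity)
        have h2 : (Real.sqrt 2 * |u| + R) * (K * Real.exp (-u^2/4)) ≤
            (5+R)*K*Real.exp (-(1/8)*u^2) := by
          have := mul_le_mul_of_nonneg_right (aux_ineq hR0 u) hK0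
          nlinarith [Real.exp_pos (-(1/8)*u^2), Real.exp_pos (-u^2/4)]
        exact mul_le_mul_of_nonneg_right (h1.trans h2) (norm_nonneg _))
      hbound_int
      (Filter.Eventually.of_forall fun u => fun z _ =>
        (bargmann_hasDerivAt u z).mul_const (f u))
  exact key.2.differentiableAt
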